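/- Let A be an n×n real matrix and let α, β be permutations of Fin n such that the determinant terms T_α = sgn(α) · ∏_i A i (α i) and T_β = sgn(β) · ∏_i A i (β i) are both nonzero. Let N be the number of cycles c in the disjoint-cycle decomposition of π = α⁻¹ ∘ β for which (-1)^{|supp c|} · ∏_{i ∈ supp c} sign(A i (α i) · A i (β i)) = 1 (i.e., the number of e-cycles in the union of the two term subgraphs). Then sign(T_α · T_β) = (-1)^N. -/

import Mathlib

open Finset

private lemma real_sign_mul_aux (x y : ℝ) :
    Real.sign (x * y) = Real.sign x * Real.sign y := by
  rcases lt_trichotomy x 0 with hx | rfl | hx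
  · rcases lt_trichotomy y 0 with hy | rfl | hy
    · rw [Real.sign_of_pos (mul_pos_of_neg_of_neg hx hy), Real.sign_of_neg hx,
        Real.sign_of_neg hy]; ring
    · simp [Real.sign_zero]
    · rw [Real.sign_of_neg (mul_neg_of_neg_of_pos hx hy), Real.sign_of_neg hx,
        Real.sign_of_pos hy]; ring
  · simp [Real.sign_zero]
  · rcases lt_trichotomy y 0 with hy | rfl | hy
    · rw [Real.sign_of_neg (mul_neg_of_pos_of_neg hx hy), Real.sign_of_pos hx,
        Real.sign_of_neg hy]; ring
    · simp [Real.sign_zero]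
    · rw [Real.sign_of_pos (mul_pos hx hy), Real.sign_of_pos hx, Real.sign_of_pos hy]; ring

/-- `Real.sign` as a monoid hom. -/
private noncomputable def realSignHom : ℝ →* ℝ where
  toFun := Real.sign
  map_one' := Real.sign_one
  map_mul' := real_sign_mul_aux

private lemma real_sign_intUnits (u : ℤˣ) : Real.sign ((u : ℤ) : ℝ) = ((u : ℤ) : ℝ) := by
  rcases Int.units_eq_one_or u with h | h <;>
    simp [h, Real.sign_one, Real.sign_neg]

open Classical in
/-- For an `n×n` real matrix `A` and permutations `α, β` with nonzero determinant terms
`T_α = sgn(α)·∏ A i (α i)` and `T_β = sgn(β)·∏ A i (β i)`, the sign of `T_α · T_β` is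
`(-1)^N`, where `N` is the number of cycles `c` in the disjoint-cycle decomposition of
`π = α⁻¹ ∘ β` satisfying `(-1)^{|supp c|} · ∏_{i ∈ supp c} sign(A i (α i) · A i (β i)) = 1`
(i.e. the number of e-cycles in the union of the two term subgraphs). -/
theorem sign_of_term_product {n : ℕ} (A : Matrix (Fin n) (Fin n) ℝ)
    (α β : Equiv.Perm (Fin n))
    (hα : ((Equiv.Perm.sign α : ℤ) : ℝ) * ∏ i, A i (α i) ≠ 0)
    (hβ : ((Equiv.Perm.sign β : ℤ) : ℝ) * ∏ i, A i (β i) ≠ 0)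
    (N : ℕ)
    (hN : N = ((α⁻¹ * β).cycleFactorsFinset.filter (fun c =>
      (-1 : ℝ) ^ c.support.card *
        ∏ i ∈ c.support, Real.sign (A i (α i) * A i (β i)) = 1)).card) :
    Real.sign ((((Equiv.Perm.sign α : ℤ) : ℝ) * ∏ i, A i (α i)) *
        (((Equiv.Perm.sign β : ℤ) : ℝ) * ∏ i, A i (β i))) = (-1 : ℝ) ^ N := by
  set π := α⁻¹ * β with hπ
  set s : Fin n → ℝ := fun i => Real.sign (A i (α i) * A i (β i)) with hsdef
  -- factors are nonzero
  have hAα : ∀ i, A i (α i) ≠ 0 := by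
    intro i
    exact Finset.prod_ne_zero_iff.mp (right_ne_zero_of_mul hα) i (mem_univ i)
  have hAβ : ∀ i, A i (β i) ≠ 0 := by
    intro i
    exact Finset.prod_ne_zero_iff.mp (right_ne_zero_of_mul hβ) i (mem_univ i)
  have hs : ∀ i, s i = 1 ∨ s i = -1 := by
    intro i
    rcases Real.sign_apply_eq_of_ne_zero _ (mul_ne_zero (hAα i) (hAβ i)) with h | h
    · exact Or.inr h
    · exact Or.inl h
  -- Step A : rewrite LHS
  have hrearr : ((((Equiv.Perm.sign α : ℤ) : ℝ) * ∏ i, A i (α i)) *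
      (((Equiv.Perm.sign β : ℤ) : ℝ) * ∏ i, A i (β i)))
      = (((Equiv.Perm.sign α : ℤ) : ℝ) * ((Equiv.Perm.sign β : ℤ) : ℝ)) *
        ∏ i, (A i (α i) * A i (β i)) := by
    rw [Finset.prod_mul_distrib]; ring
  have hsignprod : Real.sign (∏ i, (A i (α i) * A i (β i))) = ∏ i, s i := by
    exact map_prod realSignHom _ _
  have hLHS : Real.sign ((((Equiv.Perm.sign α : ℤ) : ℝ) * ∏ i, A i (α i)) *
      (((Equiv.Perm.sign β : ℤ) : ℝ) * ∏ i, A i (β i)))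
      = (((Equiv.Perm.sign α : ℤ) : ℝ) * ((Equiv.Perm.sign β : ℤ) : ℝ)) * ∏ i, s i := by
    rw [hrearr]
    have := realSignHom.map_mul
      ((((Equiv.Perm.sign α : ℤ) : ℝ) * ((Equiv.Perm.sign β : ℤ) : ℝ)))
      (∏ i, (A i (α i) * A i (β i)))
    simp only [realSignHom, MonoidHom.coe_mk, OneHom.coe_mk] at this
    rw [this, real_sign_mul_aux, real_sign_intUnits, real_sign_intUnits, hsignprod]
  rw [hLHS]
  -- Step C : product of perm signs = product over cycle factors
  have hsignπ : Equiv.Perm.sign π = ∏ c ∈ π.cycleFactorsFinset, Equiv.Perm.sign c := by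
    conv_lhs => rw [← Equiv.Perm.cycleFactorsFinset_noncommProd π]
    rw [Finset.map_noncommProd π.cycleFactorsFinset id _ Equiv.Perm.sign,
      Finset.noncommProd_eq_prod]
    rfl
  have hsigneq : (((Equiv.Perm.sign α : ℤ) : ℝ) * ((Equiv.Perm.sign β : ℤ) : ℝ))
      = ∏ c ∈ π.cycleFactorsFinset, (-(-1 : ℝ) ^ c.support.card) := by
    have h1 : Equiv.Perm.sign π = Equiv.Perm.sign α * Equiv.Perm.sign β := by
      rw [hπ, map_mul, map_inv]
      simp [mul_comm]
    have h2 : ∀ c ∈ π.cycleFactorsFinset,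
        ((Equiv.Perm.sign c : ℤ) : ℝ) = -(-1 : ℝ) ^ c.support.card := by
      intro c hc
      have hcyc := (Equiv.Perm.mem_cycleFactorsFinset_iff.mp hc).1
      rw [hcyc.sign]
      push_cast
      ring
    calc (((Equiv.Perm.sign α : ℤ) : ℝ) * ((Equiv.Perm.sign β : ℤ) : ℝ))
        = ((Equiv.Perm.sign π : ℤ) : ℝ) := by rw [h1]; push_cast; ring
      _ = ∏ c ∈ π.cycleFactorsFinset, ((Equiv.Perm.sign c : ℤ) : ℝ) := by
          rw [hsignπ]; push_cast; rfl
      _ = ∏ c ∈ π.cycleFactorsFinset, (-(-1 : ℝ) ^ c.support.card) :=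
          Finset.prod_congr rfl h2
  -- Step B : product of s over univ = over cycle supports
  have hdisj : (π.cycleFactorsFinset : Set (Equiv.Perm (Fin n))).PairwiseDisjoint
      Equiv.Perm.support := fun c hc d hd hcd =>
    (Equiv.Perm.cycleFactorsFinset_pairwise_disjoint π hc hd hcd).disjoint_support
  have hsupp : π.support = π.cycleFactorsFinset.biUnion Equiv.Perm.support := by
    ext x
    rw [Finset.mem_biUnion]
    exact Equiv.Perm.mem_support_iff_mem_support_of_mem_cycleFactorsFinset
  have hB : ∏ i, s i = ∏ c ∈ π.cycleFactorsFinset, ∏ i ∈ c.support, s i := by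
    rw [← Finset.prod_biUnion hdisj, ← hsupp]
    symm
    apply Finset.prod_subset (Finset.subset_univ _)
    intro i _ hi
    have hfix : π i = i := Equiv.Perm.notMem_support.mp hi
    have hab : β i = α i := by
      have : α⁻¹ (β i) = i := hfix
      calc β i = α (α⁻¹ (β i)) := (α.apply_symm_apply (β i)).symm
        _ = α i := by rw [this]
    rw [hsdef]
    simp only [hab]
    exact Real.sign_of_pos (mul_self_pos.mpr (hAα i))
  rw [hsigneq, hB, ← Finset.prod_mul_distrib]
  -- Step D: split by the filter
  rw [hN, ← Finset.prod_filter_mul_prod_filter_not π.cycleFactorsFinset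
    (fun c => (-1 : ℝ) ^ c.support.card * ∏ i ∈ c.support, Real.sign (A i (α i) * A i (β i)) = 1)]
  have hpm : ∀ c ∈ π.cycleFactorsFinset,
      ((-1 : ℝ) ^ c.support.card * ∏ i ∈ c.support, s i = 1) ∨
      ((-1 : ℝ) ^ c.support.card * ∏ i ∈ c.support, s i = -1) := by
    intro c _
    have hprod : (∏ i ∈ c.support, s i = 1) ∨ (∏ i ∈ c.support, s i = -1) := by
      refine Finset.prod_induction s (fun x => x = 1 ∨ x = -1) ?_ (Or.inl rfl)
        (fun i _ => hs i)
      rintro x y (rfl | rfl) (rfl | rfl) <;> simp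
    rcases Nat.even_or_odd c.support.card with he | ho
    · rw [he.neg_one_pow]
      simpa using hprod
    · rw [ho.neg_one_pow]
      rcases hprod with h | h <;> simp [h]
  have h1 : ∏ c ∈ π.cycleFactorsFinset.filter (fun c =>
      (-1 : ℝ) ^ c.support.card * ∏ i ∈ c.support, Real.sign (A i (α i) * A i (β i)) = 1),
      (-(-1 : ℝ) ^ c.support.card * ∏ i ∈ c.support, s i)
      = (-1 : ℝ) ^ (π.cycleFactorsFinset.filter (fun c =>
        (-1 : ℝ) ^ c.support.card *
          ∏ i ∈ c.support, Real.sign (A i (α i) * A i (β i)) = 1)).card := by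
    rw [← Finset.prod_const]
    apply Finset.prod_congr rfl
    intro c hc
    have hc1 := (Finset.mem_filter.mp hc).2
    have : (-1 : ℝ) ^ c.support.card * ∏ i ∈ c.support, s i = 1 := hc1
    calc -(-1 : ℝ) ^ c.support.card * ∏ i ∈ c.support, s i
        = -((-1 : ℝ) ^ c.support.card * ∏ i ∈ c.support, s i) := by ring
      _ = -1 := by rw [this]
  have h2 : ∏ c ∈ π.cycleFactorsFinset.filter (fun c =>
      ¬((-1 : ℝ) ^ c.support.card * ∏ i ∈ c.support, Real.sign (A i (α i) * A i (β i)) = 1)),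
      (-(-1 : ℝ) ^ c.support.card * ∏ i ∈ c.support, s i) = 1 := by
    apply Finset.prod_eq_one
    intro c hc
    obtain ⟨hcmem, hcne⟩ := Finset.mem_filter.mp hc
    have : (-1 : ℝ) ^ c.support.card * ∏ i ∈ c.support, s i = -1 := by
      rcases hpm c hcmem with h | h
      · exact absurd h hcne
      · exact h
    calc -(-1 : ℝ) ^ c.support.card * ∏ i ∈ c.support, s i
        = -((-1 : ℝ) ^ c.support.card * ∏ i ∈ c.support, s i) := by ring
      _ = 1 := by rw [this]; ring
  rw [h1, h2, mul_one]
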